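/- Let 𝒜 be a finite alphabet with d ≥ 2 symbols and let π = (π₀, π₁) be a combinatorial data on 𝒜 of genus one. Then the matrix Ω_π has rank 2; equivalently, the kernel of Ω_π (as a linear map ℝ^𝒜 → ℝ^𝒜) has dimension d − 2 and its image has dimension 2. -/

import Mathlib

open Matrix

/-- The matrix `Ω_π` associated to the combinatorial data `π = (p0, p1)`.
Here the values of `p0, p1` lie in `Fin d`, identified order-preservingly with
`{1, …, d}`. -/
def rvOmega {A : Type*} [Fintype A] (d : ℕ) (p0 p1 : A ≃ Fin d) :
    Matrix A A ℝ :=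
  Matrix.of fun α β =>
    if p1 β < p1 α ∧ p0 α < p0 β then (1 : ℝ)
    else if p1 α < p1 β ∧ p0 β < p0 α then -1
    else 0

open Fin.NatCast

/-- `π = (p0, p1)` has genus one: the monodromy invariant `p = p1 ∘ p0⁻¹` is a
nontrivial cyclic shift `i ↦ i + k (mod d)` for some `1 ≤ k ≤ d − 1`. -/
def rvGenusOne {A : Type*} (d : ℕ) (hd : 0 < d) (p0 p1 : A ≃ Fin d) : Prop :=
  haveI : NeZero d := ⟨hd.ne'⟩
  ∃ k : ℕ, 1 ≤ k ∧ k ≤ d - 1 ∧ ∀ i : Fin d, p1 (p0.symm i) = i + (k : Fin d)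

/-- For a genus-one combinatorial data `π` on an alphabet with `d ≥ 2`
symbols, the matrix `Ω_π` has rank `2`; equivalently, the kernel of
`Ω_π : ℝ^𝒜 → ℝ^𝒜` has dimension `d − 2` and its image has dimension `2`. -/
theorem stmt14 {A : Type*} [Fintype A] [DecidableEq A] (d : ℕ) (hd : 2 ≤ d)
    (hcard : Fintype.card A = d) (p0 p1 : A ≃ Fin d)
    (hgenus : rvGenusOne d (by omega) p0 p1) :
    (rvOmega d p0 p1).rank = 2 ∧
      Module.finrank ℝ (LinearMap.ker (rvOmega d p0 p1).mulVecLin) = d - 2 ∧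
      Module.finrank ℝ (LinearMap.range (rvOmega d p0 p1).mulVecLin) = 2 := by
  haveI : NeZero d := ⟨by omega⟩
  obtain ⟨k, hk1, hk2, hk⟩ := hgenus
  have hkd : k < d := by omega
  set g : A → ℝ := fun α => if d - k ≤ (p0 α : ℕ) then 1 else 0 with hg
  -- key pointwise formula
  have key : ∀ α β, rvOmega d p0 p1 α β = g β - g α := by
    have hp1 : ∀ α, (p1 α : ℕ) = ((p0 α : ℕ) + k) % d := by
      intro α
      have h := hk (p0 α)
      rw [Equiv.symm_apply_apply] at h
      rw [h, Fin.add_def]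
      simp [Fin.val_natCast, Nat.mod_eq_of_lt hkd]
    have h1 : ∀ n : ℕ, n < d → (n + k) % d = if n + k < d then n + k else n + k - d := by
      intro n hn; split
      · exact Nat.mod_eq_of_lt ‹_›
      · rw [Nat.mod_eq_sub_mod (by omega), Nat.mod_eq_of_lt (by omega)]
    intro α β
    have hi := (p0 α).isLt
    have hj := (p0 β).isLt
    simp only [rvOmega, Matrix.of_apply, Fin.lt_def, hp1, h1 _ hi, h1 _ hj, hg]
    split_ifs <;> (try norm_num) <;> omega
  set u : A → ℝ := fun _ => 1 with hu
  -- mulVec formula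
  have hmv : ∀ x : A → ℝ, (rvOmega d p0 p1).mulVec x
      = (∑ β, g β * x β) • u - (∑ β, x β) • g := by
    intro x
    funext α
    simp only [Matrix.mulVec, dotProduct, key, sub_mul, Finset.sum_sub_distrib,
      Pi.sub_apply, Pi.smul_apply, hu, smul_eq_mul, mul_one, ← Finset.mul_sum]
    ring
  -- special vectors
  set β0 : A := p0.symm ⟨0, by omega⟩ with hβ0
  set β1 : A := p0.symm ⟨d - 1, by omega⟩ with hβ1
  have hgβ0 : g β0 = 0 := by simp [hg, hβ0]; omega
  have hgβ1 : g β1 = 1 := by simp [hg, hβ1]; omega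
  have hne : β0 ≠ β1 := by
    simp only [hβ0, hβ1, ne_eq, EmbeddingLike.apply_eq_iff_eq, Fin.mk.injEq]
    omega
  -- range = span {u, g}
  have hrange : LinearMap.range (rvOmega d p0 p1).mulVecLin = Submodule.span ℝ {u, g} := by
    apply le_antisymm
    · rintro y ⟨x, rfl⟩
      rw [Matrix.mulVecLin_apply, hmv]
      exact Submodule.sub_mem _
        (Submodule.smul_mem _ _ (Submodule.subset_span (by simp)))
        (Submodule.smul_mem _ _ (Submodule.subset_span (by simp)))
    · rw [Submodule.span_le]
      rintro y (rfl | rfl)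
      · refine ⟨Pi.single β1 1 - Pi.single β0 1, ?_⟩
        rw [Matrix.mulVecLin_apply, hmv]
        simp [Finset.mul_sum, mul_sub, Finset.sum_sub_distrib, Pi.single_apply,
          Finset.sum_ite_eq', hgβ0, hgβ1]
      · refine ⟨-Pi.single β0 1, ?_⟩
        rw [Matrix.mulVecLin_apply, hmv]
        simp [Pi.single_apply, Finset.sum_ite_eq', hgβ0]
  -- linear independence of u, g
  have hli : LinearIndependent ℝ ![u, g] := by
    rw [LinearIndependent.pair_iff]
    intro s t hst
    have h0 := congrFun hst β0
    have h1 := congrFun hst β1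
    simp [hu, hgβ0, hgβ1] at h0 h1
    constructor <;> linarith
  have hset : ({u, g} : Set (A → ℝ)) = Set.range ![u, g] := by
    ext y
    simp [Fin.exists_fin_two, or_comm]
  have hfr : Module.finrank ℝ (LinearMap.range (rvOmega d p0 p1).mulVecLin) = 2 := by
    rw [hrange, hset, finrank_span_eq_card hli]
    simp
  have hrank : (rvOmega d p0 p1).rank = 2 := by
    rw [Matrix.rank]; exact hfr
  have hdom : Module.finrank ℝ (A → ℝ) = d := by
    simp [hcard]
  have hsum := LinearMap.finrank_range_add_finrank_ker (rvOmega d p0 p1).mulVecLin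
  rw [hdom, hfr] at hsum
  exact ⟨hrank, by omega, hfr⟩
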